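/- For a categorical random variable X on {1,...,N} with P(X=k;θ) = p_k(θ), let I₁ ∪ ... ∪ I_r be the maximal partition of {1,...,N} such that the subspaces L_j = span{p_k : k ∈ I_j} are linearly independent. Then a statistic ĝ(X) is a UMVUE if and only if ĝ is constant on each element I_j of the partition. -/

import Mathlib

/-- The block of index `j` of the partition of `{1,...,N}` given by `part`. -/
def block {N r : ℕ} (part : Fin N → Fin r) (j : Fin r) : Finset (Fin N) :=
  Finset.univ.filter fun k => part k = j

/-- The subspaces `L_j = span{p_k : k ∈ I_j}` (as functions of `θ`) are linearly
independent: any linear combination of the `p_k` vanishing identically in `θ` has all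
its block-wise parts vanishing identically. -/
def IndepPartition {N r : ℕ} {Θ : Type*} (p : Θ → Fin N → ℝ) (part : Fin N → Fin r) : Prop :=
  ∀ f : Fin N → ℝ, (∀ θ, ∑ k, f k * p θ k = 0) →
    ∀ j : Fin r, ∀ θ, ∑ k ∈ block part j, f k * p θ k = 0

/-- The partition is maximal: no block can be split into two nonempty parts while
preserving the linear independence of the spans. -/
def MaximalPartition {N r : ℕ} {Θ : Type*} (p : Θ → Fin N → ℝ) (part : Fin N → Fin r) : Prop :=
  ∀ (j : Fin r) (S : Finset (Fin N)), S ⊆ block part j → S.Nonempty →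
    (block part j \ S).Nonempty →
    ∃ f : Fin N → ℝ, (∀ θ, ∑ k, f k * p θ k = 0) ∧ ∃ θ, ∑ k ∈ S, f k * p θ k ≠ 0

/-- `g` is a UMVUE in the categorical model with pmf `p`: it is uncorrelated under
every `θ` with every unbiased estimator of zero. -/
def IsUMVUECat {N : ℕ} {Θ : Type*} (p : Θ → Fin N → ℝ) (g : Fin N → ℝ) : Prop :=
  ∀ χ : Fin N → ℝ, (∀ θ, ∑ k, χ k * p θ k = 0) → ∀ θ, ∑ k, g k * χ k * p θ k = 0

theorem stmt15 {N r : ℕ} {Θ : Type*} (p : Θ → Fin N → ℝ)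
    (hpos : ∀ θ k, 0 < p θ k) (hsum : ∀ θ, ∑ k, p θ k = 1)
    (part : Fin N → Fin r) (hsurj : Function.Surjective part)
    (hindep : IndepPartition p part) (hmax : MaximalPartition p part) :
    ∀ g : Fin N → ℝ, IsUMVUECat p g ↔ ∀ k l, part k = part l → g k = g l := by
  intro g
  constructor
  · intro hU
    by_contra hc
    push_neg at hc
    obtain ⟨k0, l0, hpart, hne⟩ := hc
    set j := part k0 with hj
    set B := block part j with hB
    set c := g k0 with hcdef
    set S := B.filter (fun k => g k = c) with hSdef
    have hSsub : S ⊆ B := Finset.filter_subset _ _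
    have hk0B : k0 ∈ B := by simp [hB, block, hj]
    have hl0B : l0 ∈ B := by simp [hB, block, hpart]
    have hSne : S.Nonempty := ⟨k0, by simp [hSdef, hk0B, hcdef]⟩
    have hCne : (B \ S).Nonempty := by
      refine ⟨l0, Finset.mem_sdiff.2 ⟨hl0B, ?_⟩⟩
      simp only [hSdef, Finset.mem_filter]
      rintro ⟨-, h⟩
      exact hne h.symm
    obtain ⟨f, hf0, θ0, hθ0⟩ := hmax j S hSsub hSne hCne
    -- powers and products
    have hpow : ∀ (m : ℕ) θ, ∑ k, (g k) ^ m * f k * p θ k = 0 := by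
      intro m
      induction m with
      | zero => intro θ; simpa using hf0 θ
      | succ m ih =>
        intro θ
        have := hU (fun k => (g k) ^ m * f k) ih θ
        have h2 : ∀ k, g k ^ (m + 1) * f k * p θ k
            = g k * ((g k) ^ m * f k) * p θ k := by
          intro k; ring
        rw [Finset.sum_congr rfl fun k _ => h2 k]
        exact this
    have hkey : ∀ (T : Finset ℝ) (m : ℕ) θ,
        ∑ k, (g k) ^ m * (∏ v ∈ T, (g k - v)) * f k * p θ k = 0 := by
      intro T
      induction T using Finset.induction with
      | empty =>
        intro m θ
        have h2 : ∀ k, g k ^ m * (∏ v ∈ (∅ : Finset ℝ), (g k - v)) * f k * p θ k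
            = g k ^ m * f k * p θ k := by intro k; simp
        rw [Finset.sum_congr rfl fun k _ => h2 k]
        exact hpow m θ
      | @insert v T' hv ih =>
        intro m θ
        have h1 := ih (m + 1) θ
        have h2 := ih m θ
        have h3 : ∀ k, g k ^ m * (∏ w ∈ insert v T', (g k - w)) * f k * p θ k
            = g k ^ (m + 1) * (∏ w ∈ T', (g k - w)) * f k * p θ k
              - v * (g k ^ m * (∏ w ∈ T', (g k - w)) * f k * p θ k) := by
          intro k
          rw [Finset.prod_insert hv]
          ring
        rw [Finset.sum_congr rfl fun k _ => h3 k, Finset.sum_sub_distrib]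
        rw [h1, ← Finset.mul_sum, h2]
        ring
    -- apply hindep with χ built from T
    set T := (B.image g).erase c with hTdef
    have hχ0 : ∀ θ, ∑ k, ((∏ v ∈ T, (g k - v)) * f k) * p θ k = 0 := by
      intro θ
      have := hkey T 0 θ
      simpa using this
    have hblk := hindep (fun k => (∏ v ∈ T, (g k - v)) * f k) hχ0 j θ0
    -- split block sum into S and its complement
    have hsplit := Finset.sum_filter_add_sum_filter_not B (fun k => g k = c)
      (fun k => ((∏ v ∈ T, (g k - v)) * f k) * p θ0 k)
    have hnot : ∑ k ∈ B.filter (fun k => ¬ g k = c),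
        ((∏ v ∈ T, (g k - v)) * f k) * p θ0 k = 0 := by
      refine Finset.sum_eq_zero fun k hk => ?_
      obtain ⟨hkB, hkne⟩ := Finset.mem_filter.mp hk
      have hmem : g k ∈ T := by
        rw [hTdef]
        exact Finset.mem_erase.mpr ⟨hkne, Finset.mem_image_of_mem g hkB⟩
      have : (∏ v ∈ T, (g k - v)) = 0 :=
        Finset.prod_eq_zero hmem (by ring)
      simp [this]
    have hq : (∏ v ∈ T, (c - v)) ≠ 0 := by
      refine Finset.prod_ne_zero_iff.2 fun v hv => ?_
      have : v ≠ c := (Finset.mem_erase.mp (hTdef ▸ hv)).1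
      exact sub_ne_zero_of_ne (Ne.symm this)
    have hSsum : ∑ k ∈ S, ((∏ v ∈ T, (g k - v)) * f k) * p θ0 k
        = (∏ v ∈ T, (c - v)) * ∑ k ∈ S, f k * p θ0 k := by
      rw [Finset.mul_sum]
      refine Finset.sum_congr rfl fun k hk => ?_
      have : g k = c := (Finset.mem_filter.mp hk).2
      rw [this]; ring
    rw [hSdef] at hSsum
    rw [hnot, add_zero, hblk] at hsplit
    rw [hsplit] at hSsum
    have : ∑ k ∈ S, f k * p θ0 k = 0 := by
      rcases mul_eq_zero.mp hSsum.symm with h | h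
      · exact absurd h hq
      · exact h
    exact hθ0 this
  · intro hconst χ hχ θ
    choose rep hrep using hsurj
    have hfib : ∑ k, g k * χ k * p θ k
        = ∑ j : Fin r, ∑ k ∈ block part j, g k * χ k * p θ k := by
      rw [← Finset.sum_biUnion]
      · refine (Finset.sum_congr ?_ fun _ _ => rfl).symm
        ext k
        simp [block, Finset.mem_biUnion]
      · intro a _ b _ hab
        simp only [Finset.disjoint_left, block, Finset.mem_filter]
        rintro k ⟨-, h1⟩ ⟨-, h2⟩
        exact hab (h1 ▸ h2 ▸ rfl)
    rw [hfib]
    refine Finset.sum_eq_zero fun j _ => ?_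
    have hblk := hindep χ hχ j θ
    have : ∑ k ∈ block part j, g k * χ k * p θ k
        = g (rep j) * ∑ k ∈ block part j, χ k * p θ k := by
      rw [Finset.mul_sum]
      refine Finset.sum_congr rfl fun k hk => ?_
      have hpk : part k = j := by simpa [block] using hk
      have := hconst k (rep j) (by rw [hpk, hrep])
      rw [this]; ring
    rw [this, hblk, mul_zero]
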